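/- Let k be a field, let e ≥ 1 be an integer, and let L/k be a (possibly infinite) Galois extension whose Galois group Gal(L/k) is abelian and satisfies σ^e = id for every σ ∈ Gal(L/k) (i.e., has exponent dividing e). Then L is generated over k by its elements of degree at most e over k; equivalently, L is contained in the compositum k^{(e)} of all finite extensions of k of degree ≤ e. -/

import Mathlib

open IntermediateField Polynomial Module

-- Lemma A: group-theoretic separation
lemma aux_subgroup_small_index {G : Type*} [CommGroup G] [Finite G] {e : ℕ} (he : 1 ≤ e)
    (hexp : ∀ g : G, g ^ e = 1) {a : G} (ha : a ≠ 1) :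
    ∃ H : Subgroup G, H.index ≤ e ∧ a ∉ H := by
  have hne : NeZero (Monoid.exponent G) := ⟨Monoid.exponent_ne_zero_of_finite⟩
  have : NeZero ((Monoid.exponent G : ℂ)) := ⟨by exact_mod_cast hne.out⟩
  obtain ⟨φ, hφ⟩ := CommGroup.exists_apply_ne_one_of_hasEnoughRootsOfUnity G ℂ ha
  refine ⟨φ.ker, ?_, fun h => hφ h⟩
  rw [Subgroup.index_ker]
  haveI : Finite φ.range := Set.Finite.to_subtype (Set.finite_range φ)
  have hcyc : IsCyclic φ.range := subgroup_units_cyclic _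
  have hdvd : Monoid.exponent φ.range ∣ e := by
    refine Monoid.exponent_dvd_of_forall_pow_eq_one ?_
    rintro ⟨x, g, rfl⟩
    exact Subtype.ext (by rw [SubmonoidClass.coe_pow, OneMemClass.coe_one, ← map_pow, hexp, map_one])
  have := hcyc.exponent_eq_card
  rw [← this]
  exact Nat.le_of_dvd he hdvd

-- Lemma B: finite Galois case
lemma aux_finite_case (k E : Type*) [Field k] [Field E] [Algebra k E] [FiniteDimensional k E]
    [IsGalois k E] (e : ℕ) (he : 1 ≤ e)
    (hab : ∀ σ τ : E ≃ₐ[k] E, σ * τ = τ * σ) (hexp : ∀ σ : E ≃ₐ[k] E, σ ^ e = 1) :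
    IntermediateField.adjoin k {x : E | (minpoly k x).natDegree ≤ e} = ⊤ := by
  classical
  set S : Set E := {x : E | (minpoly k x).natDegree ≤ e} with hS
  set F : IntermediateField k E := IntermediateField.adjoin k S with hF
  letI : CommGroup (E ≃ₐ[k] E) := { (inferInstance : Group (E ≃ₐ[k] E)) with mul_comm := hab }
  have key : ∀ τ : E ≃ₐ[k] E, τ ∈ F.fixingSubgroup → τ = 1 := by
    intro τ hτ
    by_contra hne
    obtain ⟨H, hHe, haH⟩ := aux_subgroup_small_index he hexp hne
    have hfix : τ ∉ IntermediateField.fixingSubgroup (IntermediateField.fixedField H) := by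
      rwa [IntermediateField.fixingSubgroup_fixedField]
    rw [IntermediateField.mem_fixingSubgroup_iff] at hfix
    push_neg at hfix
    obtain ⟨z, hz, hzne⟩ := hfix
    -- finrank of fixedField H over k equals H.index ≤ e
    have h1 : finrank (IntermediateField.fixedField H) E = Fintype.card H :=
      (IntermediateField.finrank_fixedField_eq_card H).trans Nat.card_eq_fintype_card
    have h2 : Fintype.card (E ≃ₐ[k] E) = finrank k E := Nat.card_eq_fintype_card.symm.trans (IsGalois.card_aut_eq_finrank k E)
    have h3 : finrank k (IntermediateField.fixedField H) * finrank (IntermediateField.fixedField H) E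
        = finrank k E := finrank_mul_finrank k _ E
    have h4 : Nat.card H * H.index = Nat.card (E ≃ₐ[k] E) := H.card_mul_index
    have hdim : finrank k (IntermediateField.fixedField H) = H.index := by
      have h5 := h3
      rw [h1, ← h2] at h5
      have h6 : H.index * Fintype.card H = Fintype.card (E ≃ₐ[k] E) := by
        simpa [Nat.card_eq_fintype_card, mul_comm] using h4
      exact Nat.eq_of_mul_eq_mul_right Fintype.card_pos (h5.trans h6.symm)
    -- z has degree ≤ e
    have hint : IsIntegral k z := IsIntegral.of_finite k z
    have hle : IntermediateField.adjoin k {z} ≤ IntermediateField.fixedField H :=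
      IntermediateField.adjoin_simple_le_iff.mpr hz
    have hmono : finrank k (IntermediateField.adjoin k {z}) ≤
        finrank k (IntermediateField.fixedField H) :=
      LinearMap.finrank_le_finrank_of_injective
        (f := (IntermediateField.inclusion hle).toLinearMap)
        (fun a b h => (IntermediateField.inclusion hle).toRingHom.injective h)
    have hzS : z ∈ S := by
      have := IntermediateField.adjoin.finrank hint
      simp only [hS, Set.mem_setOf_eq]
      omega
      -- natDegree = finrank k k⟮z⟯ ≤ finrank fixedField = index ≤ e
    exact hzne (hτ ⟨z, IntermediateField.subset_adjoin k S hzS⟩)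
  have hbot : F.fixingSubgroup = ⊥ := by
    ext τ
    simp only [Subgroup.mem_bot]
    exact ⟨key τ, fun h => h ▸ F.fixingSubgroup.one_mem⟩
  have := IsGalois.fixedField_fixingSubgroup F
  rw [hbot] at this
  rw [← this]
  ext x
  simp only [IntermediateField.mem_top, iff_true]
  rintro ⟨g, hg⟩
  rw [Subgroup.mem_bot] at hg
  subst hg
  rfl



/-- If `L/k` is a (possibly infinite) Galois extension whose Galois group
is abelian of exponent dividing `e`, then `L` is generated over `k` by its elements of
degree at most `e` over `k` (equivalently, `L ⊆ k^{(e)}`). -/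
theorem abelian_bounded_exponent_galois_generated_by_bounded_degree
    (k L : Type*) [Field k] [Field L] [Algebra k L] [IsGalois k L]
    (e : ℕ) (he : 1 ≤ e)
    (hab : ∀ σ τ : L ≃ₐ[k] L, σ * τ = τ * σ)
    (hexp : ∀ σ : L ≃ₐ[k] L, σ ^ e = 1) :
    IntermediateField.adjoin k {x : L | (minpoly k x).natDegree ≤ e} = ⊤ := by
  rw [eq_top_iff]
  intro x _
  -- x is integral over k
  have hint : IsIntegral k x := Algebra.IsIntegral.isIntegral x
  haveI : FiniteDimensional k (IntermediateField.adjoin k {x}) :=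
    IntermediateField.adjoin.finiteDimensional hint
  set E' : IntermediateField k L := normalClosure k (IntermediateField.adjoin k {x}) L with hE'
  haveI : FiniteDimensional k E' := normalClosure.is_finiteDimensional k _ L
  haveI : Algebra.IsSeparable k E' := Algebra.isSeparable_tower_bot_of_isSeparable k E' L
  haveI : IsGalois k E' := ⟨⟩
  have hsurj := AlgEquiv.restrictNormalHom_surjective (F := k) (K₁ := E') L
  have hab' : ∀ σ τ : E' ≃ₐ[k] E', σ * τ = τ * σ := by
    intro σ τ
    obtain ⟨σ, rfl⟩ := hsurj σ
    obtain ⟨τ, rfl⟩ := hsurj τ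
    rw [← map_mul, ← map_mul, hab]
  have hexp' : ∀ σ : E' ≃ₐ[k] E', σ ^ e = 1 := by
    intro σ
    obtain ⟨σ, rfl⟩ := hsurj σ
    rw [← map_pow, hexp, map_one]
  have htop := aux_finite_case k E' e he hab' hexp'
  have hxE' : x ∈ E' := IntermediateField.le_normalClosure _ (IntermediateField.mem_adjoin_simple_self k x)
  have hmap := IntermediateField.adjoin_map k {z : E' | (minpoly k z).natDegree ≤ e} E'.val
  have h4 : x ∈ (IntermediateField.adjoin k {z : E' | (minpoly k z).natDegree ≤ e}).map E'.val := by
    rw [htop]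
    exact ⟨⟨x, hxE'⟩, trivial, rfl⟩
  rw [hmap] at h4
  refine IntermediateField.adjoin.mono k _ _ ?_ h4
  rintro _ ⟨z, hz, rfl⟩
  simp only [Set.mem_setOf_eq]
  rw [show (E'.val z : L) = algebraMap E' L z from rfl,
    minpoly.algebraMap_eq (algebraMap E' L).injective z]
  exact hz
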